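/- Root-consistency of the approximation: if R is a root component of p's approximation A_p^{r'}(r) (r' > r), and for every q ∈ R there exist a process q' and a round r'' ∈ (r, r'] with (q → q') ∈ A_p^{r'}(r''), then R is a root component of the actual graph G_r, and every q ∈ R at round r causally influences p by round r'. -/

import Mathlib

variable {V : Type*}

/-- All graphs in the sequence contain all self-loops. -/
def SelfLoops (G : ℕ → V → V → Prop) : Prop := ∀ s v, G s v v

/-- `R` is a root component of the digraph `E`: a strongly connected component
(mutual reachability inside, maximal) with no in-edges from outside. -/
def IsRoot (E : V → V → Prop) (R : Set V) : Prop :=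
  R.Nonempty ∧
  (∀ q ∈ R, ∀ q' ∈ R, Relation.ReflTransGen E q q') ∧
  (∀ v : V, (∃ q ∈ R, Relation.ReflTransGen E q v ∧ Relation.ReflTransGen E v q) → v ∈ R) ∧
  (∀ q' q : V, q' ∉ R → q ∈ R → ¬ E q' q)

/-- Causal influence: `(q,r) ⤳ (p,r')`. -/
inductive Infl (G : ℕ → V → V → Prop) : V → ℕ → V → ℕ → Prop
  | refl (q r) : Infl G q r q r
  | step {q r q' s p r'} (h1 : r < s) (h2 : s ≤ r') (he : G s q q')
      (ht : Infl G q' s p r') : Infl G q r p r'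

/-- Semantic full-information approximation: edge `(q → q')` of round `s`
is in `p`'s approximation at end of round `r'`. -/
def Approx (G : ℕ → V → V → Prop) (p : V) (r' s : ℕ) (q q' : V) : Prop :=
  G s q q' ∧ Infl G q' s p r'

theorem root_consistency (G : ℕ → V → V → Prop) (R : Set V) (p : V) (r r' : ℕ)
    (hrr : r < r') (hroot : IsRoot (fun x y => Approx G p r' r x y) R)
    (hout : ∀ q ∈ R, ∃ (q' : V) (r'' : ℕ), r < r'' ∧ r'' ≤ r' ∧ Approx G p r' r'' q q') :
    IsRoot (G r) R ∧ ∀ q ∈ R, Infl G q r p r' := by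
  obtain ⟨hne, hconn, hmax, hin⟩ := hroot
  have hinfl : ∀ q ∈ R, Infl G q r p r' := by
    intro q hq
    obtain ⟨q', r'', h1, h2, he, ht⟩ := hout q hq
    exact Infl.step h1 h2 he ht
  have hback : ∀ v q, q ∈ R → Relation.ReflTransGen (G r) v q → v ∈ R := by
    intro v q hq hvq
    induction hvq using Relation.ReflTransGen.head_induction_on with
    | refl => exact hq
    | head hab _ ih =>
      by_contra hv
      exact hin _ _ hv ih ⟨hab, hinfl _ ih⟩
  refine ⟨⟨hne, ?_, ?_, ?_⟩, hinfl⟩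
  · intro q hq q' hq'
    exact Relation.ReflTransGen.mono (fun a b (h : Approx G p r' r a b) => h.1) _ _ (hconn q hq q' hq')
  · rintro v ⟨q, hq, _, hvq⟩
    exact hback v q hq hvq
  · intro q' q hq' hq he
    exact hq' (hback q' q hq (Relation.ReflTransGen.single he))
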